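/- Let S = {s_1,…,s_n} and let X be a set of ordered triplets of distinct elements of S. Construct the instance consisting of the ordering gadget (G1, G2) on levels l_1, l_2 with k = |X|, together with a third graph G3 consisting, for each triplet (s_{a_i}, s_{b_i}, s_{c_i}) ∈ X, of a triplet gadget T_i = (u_{i,a_i}, x_i, u_{i,b_i}, y_i, u_{i,c_i}), where x_i, y_i are new distinct vertices on level l_2. Then there exist linear orders on the vertices of level l_1 and of level l_2 such that no two edges of the same graph (G1, G2, or G3) cross, if and only if there exists a linear order ≺ on S such that for every (α, β, γ) ∈ X, either α ≺ β ≺ γ or γ ≺ β ≺ α. -/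

import Mathlib

/-- Two edges `(a,b)` and `(a',b')` between two levels cross. -/
def Cross (a b a' b' : ℝ) : Prop := (a < a' ∧ b' < b) ∨ (a' < a ∧ b < b')

/-- Level-1 endpoint of the `q`-th edge (`q < 4`) of the `i`-th triplet gadget
`T_i = (u_{i,a i}, x_i, u_{i,b i}, y_i, u_{i,c i})`. -/
def tripL (σu : ℕ → ℕ → ℝ) (a b c : ℕ → ℕ) (i q : ℕ) : ℝ :=
  if q = 0 then σu i (a i) else if q = 1 then σu i (b i)
  else if q = 2 then σu i (b i) else σu i (c i)

/-- Level-2 endpoint of the `q`-th edge of the `i`-th triplet gadget. -/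
def tripR (σx σy : ℕ → ℝ) (i q : ℕ) : ℝ :=
  if q ≤ 1 then σx i else σy i

/-- Helper: a sufficient condition for two edges not to cross. -/
lemma not_cross {L R L' R' : ℝ} (h1 : L < L' → R ≤ R') (h2 : L' < L → R' ≤ R) :
    ¬ Cross L R L' R' := by
  rintro (⟨h, h'⟩ | ⟨h, h'⟩)
  · linarith [h1 h]
  · linarith [h2 h]

/-- Level-1 positions for the backward direction. -/
def myU (q : ℕ → ℝ) (i j : ℕ) : ℝ := i + q j

/-- x-positions for the backward direction. -/
def myX (k : ℕ) (ε : ℕ → ℝ) (i : ℕ) : ℝ := k + 2 * i + ε i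

/-- y-positions for the backward direction. -/
def myY (k : ℕ) (ε : ℕ → ℝ) (i : ℕ) : ℝ := k + 2 * i + (1 - ε i)

/-- correctness of the reduction from Betweenness. The instance consisting of
the ordering gadget `(G1, G2)` on levels `l_1, l_2` (vertices `u_{i,j}`, `i < k`, `j < n`, on
`l_1`; vertices `v_{i,j}`, `i < k-1`, `j < n`, and `x_i, y_i`, `i < k`, on `l_2`) together with
the triplet gadgets `T_i` (graph `G3`) admits linear orders on the two levels making each of
`G1`, `G2`, `G3` crossing-free, iff the Betweenness instance `(S, X)` with
`S = {0,…,n-1}` and `X = {(a i, b i, c i) : i < k}` is satisfiable. -/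
theorem betweenness_reduction
    (n k : ℕ) (a b c : ℕ → ℕ)
    (ha : ∀ i, i < k → a i < n) (hb : ∀ i, i < k → b i < n) (hc : ∀ i, i < k → c i < n)
    (hdis : ∀ i, i < k → a i ≠ b i ∧ b i ≠ c i ∧ a i ≠ c i) :
    (∃ (σu σv : ℕ → ℕ → ℝ) (σx σy : ℕ → ℝ),
      -- all level-1 positions distinct
      (∀ i j i' j', i < k → j < n → i' < k → j' < n →
        σu i j = σu i' j' → (i, j) = (i', j')) ∧
      -- all level-2 positions distinct
      (∀ i j i' j', i < k - 1 → j < n → i' < k - 1 → j' < n →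
        σv i j = σv i' j' → (i, j) = (i', j')) ∧
      (∀ i i', i < k → i' < k → σx i = σx i' → i = i') ∧
      (∀ i i', i < k → i' < k → σy i = σy i' → i = i') ∧
      (∀ i i', i < k → i' < k → σx i ≠ σy i') ∧
      (∀ i i' j, i < k → i' < k - 1 → j < n → σx i ≠ σv i' j ∧ σy i ≠ σv i' j) ∧
      -- G1 has edges (u_{i,j}, v_{i,j}); crossing-free
      (∀ i j i' j', i < k - 1 → j < n → i' < k - 1 → j' < n →
        ¬ Cross (σu i j) (σv i j) (σu i' j') (σv i' j')) ∧
      -- G2 has edges (u_{i+1,j}, v_{i,j}); crossing-free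
      (∀ i j i' j', i < k - 1 → j < n → i' < k - 1 → j' < n →
        ¬ Cross (σu (i + 1) j) (σv i j) (σu (i' + 1) j') (σv i' j')) ∧
      -- G3 consists of the triplet gadgets; crossing-free
      (∀ i q i' q', i < k → q < 4 → i' < k → q' < 4 → (i, q) ≠ (i', q') →
        ¬ Cross (tripL σu a b c i q) (tripR σx σy i q)
                (tripL σu a b c i' q') (tripR σx σy i' q')))
    ↔
    (∃ p : ℕ → ℝ,
      (∀ j j', j < n → j' < n → p j = p j' → j = j') ∧
      (∀ i, i < k →
        (p (a i) < p (b i) ∧ p (b i) < p (c i)) ∨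
        (p (c i) < p (b i) ∧ p (b i) < p (a i)))) := by
  constructor
  · -- forward direction
    rintro ⟨σu, σv, σx, σy, hu, hv, hx, hy, hxy, hxv, hG1, hG2, hG3⟩
    rcases Nat.eq_zero_or_pos k with hk | hk
    · exact ⟨fun j => (j : ℝ), fun j j' _ _ h => Nat.cast_injective h,
        fun i hi => absurd hi (by omega)⟩
    refine ⟨fun j => σu 0 j, ?_, ?_⟩
    · intro j j' hj hj' h
      have := hu 0 j 0 j' hk hj hk hj' h
      simpa using this
    · -- order agrees across rows
      have hune : ∀ i j j', i < k → j < n → j' < n → j ≠ j' → σu i j ≠ σu i j' := by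
        intro i j j' hi hj hj' hne h
        exact hne (by simpa using hu i j i j' hi hj hi hj' h)
      have hvne : ∀ i j j', i < k - 1 → j < n → j' < n → j ≠ j' → σv i j ≠ σv i j' := by
        intro i j j' hi hj hj' hne h
        exact hne (by simpa using hv i j i j' hi hj hi hj' h)
      have h1 : ∀ i j j', i < k - 1 → j < n → j' < n → j ≠ j' →
          (σu i j < σu i j' ↔ σv i j < σv i j') := by
        intro i j j' hi hj hj' hne
        have hg := hG1 i j i j' hi hj hi hj'
        unfold Cross at hg
        push_neg at hg
        have hik : i < k := by omega
        have hu' := hune i j j' hik hj hj' hne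
        have hv' := hvne i j j' hi hj hj' hne
        constructor
        · intro h
          rcases lt_trichotomy (σv i j) (σv i j') with h'|h'|h'
          · exact h'
          · exact absurd h' hv'
          · exact absurd (hg.1 h) (not_le.mpr h')
        · intro h
          rcases lt_trichotomy (σu i j) (σu i j') with h'|h'|h'
          · exact h'
          · exact absurd h' hu'
          · exact absurd (hg.2 h') (not_le.mpr h)
      have h2 : ∀ i j j', i < k - 1 → j < n → j' < n → j ≠ j' →
          (σu (i + 1) j < σu (i + 1) j' ↔ σv i j < σv i j') := by
        intro i j j' hi hj hj' hne
        have hg := hG2 i j i j' hi hj hi hj'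
        unfold Cross at hg
        push_neg at hg
        have hik : i + 1 < k := by omega
        have hu' := hune (i + 1) j j' hik hj hj' hne
        have hv' := hvne i j j' hi hj hj' hne
        constructor
        · intro h
          rcases lt_trichotomy (σv i j) (σv i j') with h'|h'|h'
          · exact h'
          · exact absurd h' hv'
          · exact absurd (hg.1 h) (not_le.mpr h')
        · intro h
          rcases lt_trichotomy (σu (i + 1) j) (σu (i + 1) j') with h'|h'|h'
          · exact h'
          · exact absurd h' hu'
          · exact absurd (hg.2 h') (not_le.mpr h)
      have key : ∀ i j j', i < k → j < n → j' < n →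
          (σu i j < σu i j' ↔ σu 0 j < σu 0 j') := by
        intro i
        induction i with
        | zero => intro j j' _ _ _; rfl
        | succ i ih =>
          intro j j' hi hj hj'
          rcases eq_or_ne j j' with rfl | hne
          · simp
          have hi' : i < k - 1 := by omega
          rw [h2 i j j' hi' hj hj' hne, ← h1 i j j' hi' hj hj' hne]
          exact ih j j' (by omega) hj hj'
      intro i hi
      have hai := ha i hi; have hbi := hb i hi; have hci := hc i hi
      have hab : σu i (a i) ≠ σu i (b i) :=
        hune i (a i) (b i) hi hai hbi (hdis i hi).1
      have hbc : σu i (b i) ≠ σu i (c i) :=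
        hune i (b i) (c i) hi hbi hci (hdis i hi).2.1
      -- triplet gadget edges: q=0 vs q'=2 and q=1 vs q'=3
      have hg02 := hG3 i 0 i 2 hi (by norm_num) hi (by norm_num) (by simp)
      have hg13 := hG3 i 1 i 3 hi (by norm_num) hi (by norm_num) (by simp)
      have e0 : tripL σu a b c i 0 = σu i (a i) := rfl
      have e1 : tripL σu a b c i 1 = σu i (b i) := rfl
      have e2 : tripL σu a b c i 2 = σu i (b i) := rfl
      have e3 : tripL σu a b c i 3 = σu i (c i) := rfl
      have f0 : tripR σx σy i 0 = σx i := rfl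
      have f1 : tripR σx σy i 1 = σx i := rfl
      have f2 : tripR σx σy i 2 = σy i := rfl
      have f3 : tripR σx σy i 3 = σy i := rfl
      rw [e0, e2, f0, f2] at hg02
      rw [e1, e3, f1, f3] at hg13
      unfold Cross at hg02 hg13
      push_neg at hg02 hg13
      rcases lt_or_gt_of_ne (hxy i i hi hi) with hxyi | hxyi
      · -- σx i < σy i : forward orientation
        left
        have h1 : σu i (a i) < σu i (b i) := by
          rcases lt_trichotomy (σu i (a i)) (σu i (b i)) with h|h|h
          · exact h
          · exact absurd h hab
          · exact absurd (hg02.2 h) (not_le.mpr hxyi)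
        have h2 : σu i (b i) < σu i (c i) := by
          rcases lt_trichotomy (σu i (b i)) (σu i (c i)) with h|h|h
          · exact h
          · exact absurd h hbc
          · exact absurd (hg13.2 h) (not_le.mpr hxyi)
        exact ⟨(key i (a i) (b i) hi hai hbi).mp h1,
               (key i (b i) (c i) hi hbi hci).mp h2⟩
      · -- σy i < σx i : reverse orientation
        right
        have h1 : σu i (b i) < σu i (a i) := by
          rcases lt_trichotomy (σu i (b i)) (σu i (a i)) with h|h|h
          · exact h
          · exact absurd h.symm hab
          · exact absurd (hg02.1 h) (not_le.mpr hxyi)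
        have h2 : σu i (c i) < σu i (b i) := by
          rcases lt_trichotomy (σu i (c i)) (σu i (b i)) with h|h|h
          · exact h
          · exact absurd h.symm hbc
          · exact absurd (hg13.1 h) (not_le.mpr hxyi)
        exact ⟨(key i (c i) (b i) hi hci hbi).mp h2,
               (key i (b i) (a i) hi hbi hai).mp h1⟩
  · -- backward direction
    rintro ⟨p, hinj, hbet⟩
    set q : ℕ → ℝ := fun j => Real.arctan (p j) / 4 + 1 / 2 with hqdef
    have hq0 : ∀ j, 0 < q j ∧ q j < 1 := by
      intro j
      have h1 := Real.arctan_lt_pi_div_two (p j)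
      have h2 := Real.neg_pi_div_two_lt_arctan (p j)
      have h3 := Real.pi_le_four
      constructor <;> simp only [hqdef] <;> nlinarith
    have hqlt : ∀ j j', p j < p j' → q j < q j' := by
      intro j j' h
      have := Real.arctan_strictMono h
      simp only [hqdef]
      linarith
    have hqinj : ∀ j j', j < n → j' < n → q j = q j' → j = j' := by
      intro j j' hj hj' h
      apply hinj j j' hj hj'
      have : Real.arctan (p j) = Real.arctan (p j') := by
        simp only [hqdef] at h; linarith
      exact Real.arctan_injective this
    set ε : ℕ → ℝ := fun i => if p (a i) < p (b i) then 0 else 1 with hεdef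
    have hε01 : ∀ i, ε i = 0 ∨ ε i = 1 := by
      intro i; simp only [hεdef]; split <;> simp
    have hεb : ∀ i, 0 ≤ ε i ∧ ε i ≤ 1 := by
      intro i; rcases hε01 i with h|h <;> rw [h] <;> norm_num
    refine ⟨myU q, myU q, myX k ε, myY k ε, ?_, ?_, ?_, ?_, ?_, ?_, ?_, ?_, ?_⟩
    · -- level-1 distinctness
      intro i j i' j' hi hj hi' hj' h
      unfold myU at h
      have hq := hq0 j; have hq' := hq0 j'
      have hii' : i = i' := by
        rcases Nat.lt_trichotomy i i' with h'|h'|h'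
        · exfalso; have : (i : ℝ) + 1 ≤ i' := (by exact_mod_cast h' : _); linarith
        · exact h'
        · exfalso; have : (i' : ℝ) + 1 ≤ i := (by exact_mod_cast h' : _); linarith
      subst hii'
      have : q j = q j' := by linarith
      rw [hqinj j j' hj hj' this]
    · -- level-2 distinctness
      intro i j i' j' hi hj hi' hj' h
      unfold myU at h
      have hq := hq0 j; have hq' := hq0 j'
      have hii' : i = i' := by
        rcases Nat.lt_trichotomy i i' with h'|h'|h'
        · exfalso; have : (i : ℝ) + 1 ≤ i' := (by exact_mod_cast h' : _); linarith
        · exact h'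
        · exfalso; have : (i' : ℝ) + 1 ≤ i := (by exact_mod_cast h' : _); linarith
      subst hii'
      have : q j = q j' := by linarith
      rw [hqinj j j' hj hj' this]
    · -- x distinct
      intro i i' _ _ h
      unfold myX at h
      rcases Nat.lt_trichotomy i i' with h'|h'|h'
      · exfalso; have : (i : ℝ) + 1 ≤ i' := by exact_mod_cast h'
        linarith [(hεb i).1, (hεb i).2, (hεb i').1, (hεb i').2]
      · exact h'
      · exfalso; have : (i' : ℝ) + 1 ≤ i := by exact_mod_cast h'
        linarith [(hεb i).1, (hεb i).2, (hεb i').1, (hεb i').2]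
    · -- y distinct
      intro i i' _ _ h
      unfold myY at h
      rcases Nat.lt_trichotomy i i' with h'|h'|h'
      · exfalso; have : (i : ℝ) + 1 ≤ i' := by exact_mod_cast h'
        linarith [(hεb i).1, (hεb i).2, (hεb i').1, (hεb i').2]
      · exact h'
      · exfalso; have : (i' : ℝ) + 1 ≤ i := by exact_mod_cast h'
        linarith [(hεb i).1, (hεb i).2, (hεb i').1, (hεb i').2]
    · -- x ≠ y
      intro i i' _ _ h
      unfold myX myY at h
      rcases Nat.lt_trichotomy i i' with h'|h'|h'
      · have : (i : ℝ) + 1 ≤ i' := by exact_mod_cast h'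
        linarith [(hεb i).1, (hεb i).2, (hεb i').1, (hεb i').2]
      · subst h'
        rcases hε01 i with he|he <;> rw [he] at h <;> linarith
      · have : (i' : ℝ) + 1 ≤ i := by exact_mod_cast h'
        linarith [(hεb i).1, (hεb i).2, (hεb i').1, (hεb i').2]
    · -- x, y ≠ v
      intro i i' j _ hi' hj
      have hq := hq0 j
      have hcast : (i' : ℝ) + 2 ≤ k := by exact_mod_cast (by omega : i' + 2 ≤ k)
      constructor <;> intro h <;> simp only [myX, myY, myU] at h <;>
        linarith [(hεb i).1, (hεb i).2]
    · -- G1 crossing-free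
      intro i j i' j' _ _ _ _
      apply not_cross <;> unfold myU <;> intro h <;> linarith
    · -- G2 crossing-free
      intro i j i' j' _ _ _ _
      apply not_cross <;> unfold myU <;> intro h <;> push_cast at h ⊢ <;> linarith
    · -- G3 crossing-free
      intro i t i' t' hi ht hi' ht' hne
      have hLlo : ∀ (s m : ℕ), (s : ℝ) < tripL (myU q) a b c s m := by
        intro s m
        unfold tripL myU
        split_ifs <;>
          first
            | (have := (hq0 (a s)).1; linarith)
            | (have := (hq0 (b s)).1; linarith)
            | (have := (hq0 (c s)).1; linarith)
      have hLhi : ∀ (s m : ℕ), tripL (myU q) a b c s m < (s : ℝ) + 1 := by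
        intro s m
        unfold tripL myU
        split_ifs <;>
          first
            | (have := (hq0 (a s)).2; linarith)
            | (have := (hq0 (b s)).2; linarith)
            | (have := (hq0 (c s)).2; linarith)
      have hRlo : ∀ (s m : ℕ), (k : ℝ) + 2 * s ≤ tripR (myX k ε) (myY k ε) s m := by
        intro s m
        unfold tripR myX myY
        split_ifs <;> linarith [(hεb s).1, (hεb s).2]
      have hRhi : ∀ (s m : ℕ), tripR (myX k ε) (myY k ε) s m ≤ (k : ℝ) + 2 * s + 1 := by
        intro s m
        unfold tripR myX myY
        split_ifs <;> linarith [(hεb s).1, (hεb s).2]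
      rcases Nat.lt_trichotomy i i' with hii | hii | hii
      · have h1 : (i : ℝ) + 1 ≤ i' := by exact_mod_cast hii
        apply not_cross
        · intro _
          linarith [hRhi i t, hRlo i' t']
        · intro h
          exfalso
          linarith [hLhi i t, hLlo i' t']
      · subst hii
        have htne : t ≠ t' := fun h => hne (by rw [h])
        rcases hbet i hi with ⟨hab, hbc⟩ | ⟨hcb, hba⟩
        · -- forward orientation
          have hε : ε i = 0 := by simp only [hεdef]; rw [if_pos hab]
          have hqab : q (a i) < q (b i) := hqlt _ _ hab
          have hqbc : q (b i) < q (c i) := hqlt _ _ hbc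
          interval_cases t <;> interval_cases t' <;>
            first
              | exact absurd rfl htne
              | (refine not_cross ?_ ?_ <;> intro hlt <;>
                  simp only [tripL, tripR, myU, myX, myY] at hlt ⊢ <;>
                  norm_num at hlt <;> norm_num <;>
                  linarith [hε, hqab, hqbc])
        · -- reverse orientation
          have hε : ε i = 1 := by simp only [hεdef]; rw [if_neg (by linarith)]
          have hqcb : q (c i) < q (b i) := hqlt _ _ hcb
          have hqba : q (b i) < q (a i) := hqlt _ _ hba
          interval_cases t <;> interval_cases t' <;>
            first
              | exact absurd rfl htne
              | (refine not_cross ?_ ?_ <;> intro hlt <;>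
                  simp only [tripL, tripR, myU, myX, myY] at hlt ⊢ <;>
                  norm_num at hlt <;> norm_num <;>
                  linarith [hε, hqcb, hqba])
      · have h1 : (i' : ℝ) + 1 ≤ i := by exact_mod_cast hii
        apply not_cross
        · intro h
          exfalso
          linarith [hLlo i t, hLhi i' t', h]
        · intro _
          linarith [hRhi i' t', hRlo i t]
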